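/- arXiv:2212.10347 — 3 statements merged into one kernel-verified Lean document; each statement's English description precedes it below -/
import Mathlib

section
/- Let V be a fixed n×n real matrix, G(t) := I + t·V invertible, and A(t) := det(G(t)) · G(t)^{-1} · G(t)^{-T}. Then d/dt A(t) = tr(V G(t)^{-1}) · A(t) − G(t)^{-1} V · A(t) − (G(t)^{-1} V · A(t))^T. -/
open scoped Matrix

attribute [local instance] Matrix.frobeniusNormedAddCommGroup Matrix.frobeniusNormedRing
  Matrix.frobeniusNormedSpace Matrix.frobeniusNormedAlgebra

open Polynomial

section aux

variable {n : ℕ}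

/-- transpose derivative -/
lemma hasDerivAt_transpose {f : ℝ → Matrix (Fin n) (Fin n) ℝ} {f' : Matrix (Fin n) (Fin n) ℝ}
    {t : ℝ} (hf : HasDerivAt f f' t) : HasDerivAt (fun s => (f s)ᵀ) f'ᵀ t := by
  have hc := (LinearMap.toContinuousLinearMap
      (Matrix.transposeLinearEquiv (Fin n) (Fin n) ℝ ℝ).toLinearMap).hasFDerivAt (x := f t)
  exact hc.comp_hasDerivAt t hf

/-- Jacobi formula for the affine family. -/
lemma hasDerivAt_det_affine (V : Matrix (Fin n) (Fin n) ℝ)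
    (G : ℝ → Matrix (Fin n) (Fin n) ℝ) (hG : ∀ s, G s = 1 + s • V)
    (t : ℝ) (hinv : IsUnit (G t).det) :
    HasDerivAt (fun s => (G s).det) ((G t).det * ((G t)⁻¹ * V).trace) t := by
  set B := (G t)⁻¹ with hB
  set M := B * V with hM
  set p := (Matrix.det (1 + (X : ℝ[X]) • M.map C)).divX.divX with hp
  have hBG : G t * B = 1 := Matrix.mul_nonsing_inv _ hinv
  have key : ∀ s : ℝ, (G (t + s)).det =
      (G t).det * (1 + M.trace * s + p.eval s * s ^ 2) := by
    intro s
    have h1 : G (t + s) = G t * (1 + s • M) := by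
      rw [Matrix.mul_add, mul_one, hM, Matrix.mul_smul, ← mul_assoc, hBG, one_mul,
        hG, hG t, add_smul]
      abel
    rw [h1, Matrix.det_mul, Matrix.det_one_add_smul, hp]
  -- derivative of F at 0
  have hF : HasDerivAt (fun s : ℝ => (G t).det * (1 + M.trace * s + p.eval s * s ^ 2))
      ((G t).det * M.trace) 0 := by
    have h1 : HasDerivAt (fun s : ℝ => 1 + M.trace * s + p.eval s * s ^ 2) M.trace 0 := by
      have ha : HasDerivAt (fun s : ℝ => 1 + M.trace * s) M.trace 0 := by
        simpa using ((hasDerivAt_id (0:ℝ)).const_mul M.trace).const_add 1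
      have hb : HasDerivAt (fun s : ℝ => p.eval s * s ^ 2) 0 0 := by
        have := (p.hasDerivAt (0:ℝ)).mul (hasDerivAt_pow 2 (0:ℝ))
        simpa [Pi.mul_def] using this
      simpa [Pi.add_def] using ha.add hb
    exact h1.const_mul _
  -- shift
  have hshift : HasDerivAt (fun s : ℝ => s - t) 1 t := by
    simpa using (hasDerivAt_id t).sub_const t
  have h2 : HasDerivAt (fun s : ℝ =>
      (G t).det * (1 + M.trace * (s - t) + p.eval (s - t) * (s - t) ^ 2))
      ((G t).det * M.trace) t := by
    have := HasDerivAt.scomp t (by simpa using hF) hshift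
    simpa [Function.comp_def] using this
  have heq : (fun s : ℝ =>
      (G t).det * (1 + M.trace * (s - t) + p.eval (s - t) * (s - t) ^ 2))
      = fun s => (G s).det := by
    funext s
    rw [← key (s - t)]
    ring_nf
  rwa [heq] at h2

end aux


/-- For `G t = I + t • V` invertible and `A t = det (G t) • ((G t)⁻¹ * (G t)⁻ᵀ)`,
`d/dt A = tr (V G⁻¹) • A − G⁻¹ V A − (G⁻¹ V A)ᵀ`. -/
theorem deriv_A_affine {n : ℕ} (V : Matrix (Fin n) (Fin n) ℝ)
    (G A : ℝ → Matrix (Fin n) (Fin n) ℝ) (hG : ∀ s, G s = 1 + s • V)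
    (hA : ∀ s, A s = (G s).det • ((G s)⁻¹ * ((G s)⁻¹)ᵀ))
    (t : ℝ) (hinv : IsUnit (G t).det) :
    HasDerivAt A ((V * (G t)⁻¹).trace • A t - (G t)⁻¹ * V * A t
      - ((G t)⁻¹ * V * A t)ᵀ) t := by

  set B := (G t)⁻¹ with hB
  set D := (G t).det with hD
  have hu : IsUnit (G t) := (Matrix.isUnit_iff_isUnit_det _).mpr hinv
  have hGd : HasDerivAt G V t := by
    have : HasDerivAt (fun s : ℝ => 1 + s • V) V t := by
      exact (((hasDerivAt_id t).smul_const V).const_add (1 : Matrix (Fin n) (Fin n) ℝ)).congr_deriv (one_smul _ _)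
    have hfun : G = fun s : ℝ => 1 + s • V := funext hG
    rw [hfun]; exact this
  -- inverse derivative
  have hInv : HasDerivAt (fun s => (G s)⁻¹) (-(B * V * B)) t := by
    have hring : HasFDerivAt Ring.inverse
        (-(ContinuousLinearMap.mulLeftRight ℝ _ ↑hu.unit⁻¹ ↑hu.unit⁻¹)) (hu.unit : Matrix (Fin n) (Fin n) ℝ) :=
      hasFDerivAt_ringInverse hu.unit
    have hcoe : ((hu.unit⁻¹ : (Matrix (Fin n) (Fin n) ℝ)ˣ) : Matrix (Fin n) (Fin n) ℝ) = B := by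
      rw [Matrix.coe_units_inv, hu.unit_spec]
    have h := hring.comp_hasDerivAt_of_eq t hGd hu.unit_spec
    have heq : Ring.inverse ∘ G = fun s => (G s)⁻¹ := by
      funext s; exact (Matrix.nonsing_inv_eq_ringInverse _).symm
    rw [heq] at h
    have h' := h
    simp only [hcoe, ContinuousLinearMap.neg_apply, ContinuousLinearMap.mulLeftRight_apply] at h'
    exact h'
  have hInvT : HasDerivAt (fun s => ((G s)⁻¹)ᵀ) (-(B * V * B))ᵀ t := hasDerivAt_transpose hInv
  have hdet : HasDerivAt (fun s => (G s).det) (D * (B * V).trace) t :=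
    hasDerivAt_det_affine V G hG t hinv
  have hmul : HasDerivAt (fun s => (G s)⁻¹ * ((G s)⁻¹)ᵀ)
      (-(B * V * B) * Bᵀ + B * (-(B * V * B))ᵀ) t := hInv.mul hInvT
  have hAd : HasDerivAt A
      (D • (-(B * V * B) * Bᵀ + B * (-(B * V * B))ᵀ) + (D * (B * V).trace) • (B * Bᵀ)) t := by
    have h := hdet.smul hmul
    have hfun : A = fun s => (G s).det • ((G s)⁻¹ * ((G s)⁻¹)ᵀ) := funext hA
    rw [hfun]; have h' := h; simp only [Pi.smul_def'] at h'; exact h'.congr_deriv (by simp [← hB, ← hD])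
  convert hAd using 1
  rw [hA t, ← hB, ← hD]
  rw [Matrix.trace_mul_comm]
  simp only [Matrix.mul_smul, Matrix.smul_mul, Matrix.transpose_smul, Matrix.transpose_mul,
    Matrix.transpose_neg, Matrix.transpose_transpose, Matrix.neg_mul, Matrix.mul_neg,
    smul_neg, smul_smul, smul_add, neg_one_smul, mul_assoc, Matrix.mul_assoc]
  rw [mul_comm ((B * V).trace) D]
  abel
end

section
/- Let G : Ω → Ω' be a smooth diffeomorphism between open sets of ℝ³ with det(DG) > 0, and f : Ω' → ℝ³ a C¹ vector field. Then (curl f) ∘ G = (1/det DG) · DG · curl((DG)^T · (f ∘ G)), where DG is the Jacobian of G. -/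
open scoped Matrix

/-- The Jacobian matrix of a map `G : ℝ³ → ℝ³` at `x`. -/
noncomputable def jacobian3 (G : (Fin 3 → ℝ) → (Fin 3 → ℝ)) (x : Fin 3 → ℝ) :
    Matrix (Fin 3) (Fin 3) ℝ :=
  Matrix.of fun i j => fderiv ℝ G x (Pi.single j 1) i

/-- The partial derivative `∂ⱼ fᵢ` of a vector field `f : ℝ³ → ℝ³` at `x`. -/
noncomputable def pderiv3 (f : (Fin 3 → ℝ) → (Fin 3 → ℝ)) (j i : Fin 3) (x : Fin 3 → ℝ) : ℝ :=
  fderiv ℝ f x (Pi.single j 1) i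

/-- The curl of a vector field `f : ℝ³ → ℝ³`:
`curl f = (∂₂f₃ − ∂₃f₂, ∂₃f₁ − ∂₁f₃, ∂₁f₂ − ∂₂f₁)` (0-indexed). -/
noncomputable def curl3 (f : (Fin 3 → ℝ) → (Fin 3 → ℝ)) (x : Fin 3 → ℝ) : Fin 3 → ℝ :=
  ![pderiv3 f 1 2 x - pderiv3 f 2 1 x,
    pderiv3 f 2 0 x - pderiv3 f 0 2 x,
    pderiv3 f 0 1 x - pderiv3 f 1 0 x]

/-- Covariant (Piola) transformation rule for the curl under a change of variables:
`(curl f) ∘ G = (1/det DG) · DG · curl((DG)ᵀ (f ∘ G))`. -/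
theorem curl_comp_diffeo
    (Ω Ω' : Set (Fin 3 → ℝ)) (hΩ : IsOpen Ω) (hΩ' : IsOpen Ω')
    (G : (Fin 3 → ℝ) → (Fin 3 → ℝ)) (hbij : Set.BijOn G Ω Ω')
    (hG : ContDiffOn ℝ 2 G Ω)
    (hdet : ∀ x ∈ Ω, 0 < (jacobian3 G x).det)
    (f : (Fin 3 → ℝ) → (Fin 3 → ℝ)) (hf : ContDiffOn ℝ 1 f Ω') :
    ∀ x ∈ Ω, curl3 f (G x)
      = ((jacobian3 G x).det)⁻¹ •
          (jacobian3 G x).mulVec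
            (curl3 (fun y => ((jacobian3 G y)ᵀ).mulVec (f (G y))) x) := by
  intro x hx
  have hG2 : ContDiffAt ℝ 2 G x := hG.contDiffAt (hΩ.mem_nhds hx)
  have hGd : DifferentiableAt ℝ G x := hG2.differentiableAt (by norm_num)
  have hxΩ' : G x ∈ Ω' := hbij.mapsTo hx
  have hf1 : ContDiffAt ℝ 1 f (G x) := hf.contDiffAt (hΩ'.mem_nhds hxΩ')
  have hfd : DifferentiableAt ℝ f (G x) := hf1.differentiableAt (by norm_num)
  have hDGd : DifferentiableAt ℝ (fderiv ℝ G) x :=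
    (hG2.fderiv_right (m := 1) (by norm_num)).differentiableAt (by norm_num)
  have hsym : ∀ v w, fderiv ℝ (fderiv ℝ G) x v w = fderiv ℝ (fderiv ℝ G) x w v :=
    hG2.isSymmSndFDerivAt (by simp [minSmoothness_of_isRCLikeNormedField])
  have hd : (jacobian3 G x).det ≠ 0 := ne_of_gt (hdet x hx)
  -- differentiability of the entries of the Jacobian
  have ha : ∀ i k : Fin 3, DifferentiableAt ℝ (fun y => fderiv ℝ G y (Pi.single i 1) k) x := by
    intro i k
    exact (((ContinuousLinearMap.proj k).comp
      (ContinuousLinearMap.apply ℝ (Fin 3 → ℝ) (Pi.single i 1))).differentiableAt).comp x hDGd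
  have hfa : ∀ i k j : Fin 3,
      fderiv ℝ (fun y => fderiv ℝ G y (Pi.single i 1) k) x (Pi.single j 1)
        = fderiv ℝ (fderiv ℝ G) x (Pi.single j 1) (Pi.single i 1) k := by
    intro i k j
    have h1 : (fun y => fderiv ℝ G y (Pi.single i 1) k)
        = ((ContinuousLinearMap.proj k).comp
            (ContinuousLinearMap.apply ℝ (Fin 3 → ℝ) (Pi.single i 1))) ∘ (fderiv ℝ G) := rfl
    rw [h1, fderiv_comp x (ContinuousLinearMap.differentiableAt _) hDGd,
      ContinuousLinearMap.fderiv]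
    rfl
  -- differentiability of the components of f ∘ G
  have hb : ∀ k : Fin 3, DifferentiableAt ℝ (fun y => f (G y) k) x := by
    intro k
    exact ((ContinuousLinearMap.proj k).differentiableAt).comp x (hfd.comp x hGd)
  have hexp : ∀ (w : Fin 3 → ℝ) (k : Fin 3),
      fderiv ℝ f (G x) w k = ∑ l, w l * fderiv ℝ f (G x) (Pi.single l 1) k := by
    intro w k
    have hw : w = ∑ l, w l • (Pi.single l 1 : Fin 3 → ℝ) := by
      funext j; simp [Finset.sum_apply, Pi.single_apply]
    conv_lhs => rw [hw]
    simp [map_sum, map_smul, Finset.sum_apply]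
  have hfb : ∀ k j : Fin 3,
      fderiv ℝ (fun y => f (G y) k) x (Pi.single j 1)
        = ∑ l, fderiv ℝ G x (Pi.single j 1) l * fderiv ℝ f (G x) (Pi.single l 1) k := by
    intro k j
    have h1 : (fun y => f (G y) k) = (ContinuousLinearMap.proj k : (Fin 3 → ℝ) →L[ℝ] ℝ) ∘ (f ∘ G) := rfl
    rw [h1, fderiv_comp x (ContinuousLinearMap.differentiableAt _) (hfd.comp x hGd),
      fderiv_comp x hfd hGd, ContinuousLinearMap.fderiv]
    simp only [ContinuousLinearMap.coe_comp', Function.comp_apply,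
      ContinuousLinearMap.proj_apply]
    exact hexp _ k
  -- the key formula for the partial derivatives of (DG)ᵀ (f ∘ G)
  have key : ∀ i j : Fin 3,
      pderiv3 (fun y => ((jacobian3 G y)ᵀ).mulVec (f (G y))) j i x
        = (∑ k, fderiv ℝ (fderiv ℝ G) x (Pi.single j 1) (Pi.single i 1) k * f (G x) k)
          + ∑ k, fderiv ℝ G x (Pi.single i 1) k *
              ∑ l, fderiv ℝ G x (Pi.single j 1) l * fderiv ℝ f (G x) (Pi.single l 1) k := by
    intro i j
    have hv : (fun y => ((jacobian3 G y)ᵀ).mulVec (f (G y)))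
        = fun y i => ∑ k, fderiv ℝ G y (Pi.single i 1) k * f (G y) k := by
      funext y i
      simp [Matrix.mulVec, dotProduct, jacobian3]
    rw [pderiv3, hv,
      fderiv_pi (fun i => DifferentiableAt.fun_sum fun k _ => (ha i k).fun_mul (hb k))]
    simp only [ContinuousLinearMap.pi_apply]
    rw [fderiv_fun_sum (fun k _ => (ha i k).fun_mul (hb k))]
    simp only [ContinuousLinearMap.sum_apply]
    have hterm : ∀ k : Fin 3,
        (fderiv ℝ (fun y => fderiv ℝ G y (Pi.single i 1) k * f (G y) k) x) (Pi.single j 1)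
          = fderiv ℝ G x (Pi.single i 1) k *
              (∑ l, fderiv ℝ G x (Pi.single j 1) l * fderiv ℝ f (G x) (Pi.single l 1) k)
            + f (G x) k * fderiv ℝ (fderiv ℝ G) x (Pi.single j 1) (Pi.single i 1) k := by
      intro k
      rw [fderiv_fun_mul (ha i k) (hb k)]
      simp only [ContinuousLinearMap.add_apply, ContinuousLinearMap.smul_apply, smul_eq_mul]
      rw [hfa, hfb]
    simp only [hterm]
    rw [Finset.sum_add_distrib, add_comm]
    congr 1
    exact Finset.sum_congr rfl fun k _ => mul_comm _ _
  -- now the componentwise computation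
  funext i
  have h21 := hsym (Pi.single 2 1) (Pi.single 1 1)
  have h20 := hsym (Pi.single 2 1) (Pi.single 0 1)
  have h10 := hsym (Pi.single 1 1) (Pi.single 0 1)
  rw [Pi.smul_apply, smul_eq_mul, eq_inv_mul_iff_mul_eq₀ hd, Matrix.det_fin_three]
  fin_cases i <;>
  · simp only [Fin.zero_eta, Fin.mk_one, Fin.reduceFinMk, Fin.isValue]
    simp only [curl3, Matrix.cons_val_zero, Matrix.cons_val_one, Matrix.head_cons,
      Matrix.cons_val_two, Matrix.tail_cons, Matrix.mulVec, dotProduct,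
      Fin.sum_univ_three]
    rw [key 2 1, key 1 2, key 0 2, key 2 0, key 1 0, key 0 1]
    simp only [pderiv3, jacobian3, Matrix.of_apply, Fin.sum_univ_three]
    rw [h21, h20, h10]
    ring
end

section
/- Let K, M be symmetric n×n real matrices with M positive definite, λ a simple eigenvalue with K u = λ M u, u ≠ 0, and u_⋆ a vector with u_⋆ᵀ M u = 1. Then the bordered matrix [[K − λM, −M u],[u_⋆ᵀ M, 0]] of size (n+1)×(n+1) is invertible. -/
open scoped Matrix

/-- For a generalized eigenvalue problem `K u = λ M u` with `K, M` symmetric, `M` positive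
definite, `λ` a simple eigenvalue (kernel of `K − λM` spanned by `u ≠ 0`), and a
normalization vector `u⋆` with `u⋆ᵀ M u = 1`, the bordered matrix
`[[K − λM, −M u], [u⋆ᵀ M, 0]]` is invertible. -/
theorem bordered_matrix_isUnit {n : ℕ}
    (K M : Matrix (Fin n) (Fin n) ℝ) (hK : K.IsSymm) (hMsymm : M.IsSymm)
    (hM : M.PosDef) (lam : ℝ) (u ustar : Fin n → ℝ) (hu : u ≠ 0)
    (heig : K.mulVec u = lam • M.mulVec u)
    (hsimple : ∀ w, (K - lam • M).mulVec w = 0 → ∃ c : ℝ, w = c • u)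
    (hnorm : ustar ⬝ᵥ M.mulVec u = 1) :
    IsUnit (Matrix.fromBlocks
      (K - lam • M)
      (Matrix.of fun i (_ : Unit) => -(M.mulVec u i))
      (Matrix.of fun (_ : Unit) j => (Matrix.vecMul ustar M) j)
      (0 : Matrix Unit Unit ℝ)) := by
  rw [Matrix.isUnit_iff_isUnit_det, isUnit_iff_ne_zero]
  intro hdet
  obtain ⟨v, hv0, hv⟩ := Matrix.exists_mulVec_eq_zero_iff.2 hdet
  set w : Fin n → ℝ := v ∘ Sum.inl with hw
  set t : ℝ := v (Sum.inr ()) with ht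
  rw [Matrix.fromBlocks_mulVec] at hv
  have h1 : (K - lam • M).mulVec w = t • M.mulVec u := by
    funext i
    have := congrFun hv (Sum.inl i)
    simp only [Sum.elim_inl, Pi.add_apply, Pi.zero_apply] at this
    have hB : (Matrix.of fun i (_ : Unit) => -(M.mulVec u i)).mulVec (v ∘ Sum.inr) i
        = -(M.mulVec u i) * t := by
      simp [Matrix.mulVec, dotProduct]
      exact Or.inl rfl
    rw [hB] at this
    have : (K - lam • M).mulVec w i = M.mulVec u i * t := by linarith
    simpa [mul_comm] using this
  have h2 : Matrix.vecMul ustar M ⬝ᵥ w = 0 := by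
    have := congrFun hv (Sum.inr ())
    simp only [Sum.elim_inr, Pi.add_apply, Pi.zero_apply] at this
    have hC : (Matrix.of fun (_ : Unit) j => (Matrix.vecMul ustar M) j).mulVec w ()
        = Matrix.vecMul ustar M ⬝ᵥ w := by
      simp [Matrix.mulVec]
    rw [hC] at this
    simpa using this
  have hsym : (K - lam • M)ᵀ = K - lam • M := by
    rw [Matrix.transpose_sub, Matrix.transpose_smul, hK.eq, hMsymm.eq]
  have hKu : (K - lam • M).mulVec u = 0 := by
    rw [Matrix.sub_mulVec, Matrix.smul_mulVec, heig, sub_self]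
  have hdot : u ⬝ᵥ (K - lam • M).mulVec w = 0 := by
    rw [Matrix.dotProduct_mulVec, ← Matrix.mulVec_transpose, hsym, hKu]
    simp
  have hpos : 0 < u ⬝ᵥ M.mulVec u := by
    have := hM.dotProduct_mulVec_pos hu
    simpa using this
  have ht0 : t = 0 := by
    rw [h1, dotProduct_smul] at hdot
    have := mul_eq_zero.mp hdot
    rcases this with h | h
    · exact h
    · exact absurd h (ne_of_gt hpos)
  rw [ht0, zero_smul] at h1
  obtain ⟨c, hc⟩ := hsimple w h1
  have hc0 : c = 0 := by
    rw [hc, dotProduct_smul, ← Matrix.dotProduct_mulVec, hnorm] at h2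
    simpa using h2
  have hw0 : w = 0 := by rw [hc, hc0, zero_smul]
  apply hv0
  funext i
  cases i with
  | inl i => exact congrFun hw0 i
  | inr i => cases i; exact ht0
end
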